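/- PELT pruning criterion: if integers 1 ≤ r < s satisfy F(r) + C(r, s−1) + K ≥ F(s), then for every integer t > s one has F(r) + C(r, t−1) + β ≥ F(s) + C(s, t−1) + β; consequently r never yields a strictly smaller candidate value than s as the last changepoint prior to any future time t, and may be discarded from the optimal-partition recursion without loss of optimality. -/
import Mathlib


/-- The optimal-partition objective: `opF C β s` is the minimum, over all changepoint
vectors `1 = τ₀ < τ₁ < ⋯ < τ_m < τ_{m+1} = s`, of the total segment cost
`∑_{i=1}^{m+1} C (τ_{i-1}) (τ_i - 1)` plus a penalty `β` per changepoint,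
with the convention `opF C β 1 = -β`. -/
noncomputable def opF (C : ℕ → ℕ → ℝ) (β : ℝ) (s : ℕ) : ℝ :=
  if s = 1 then -β
  else sInf {v : ℝ | ∃ (m : ℕ) (τ : ℕ → ℕ),
    τ 0 = 1 ∧ τ (m + 1) = s ∧ (∀ i ≤ m, τ i < τ (i + 1)) ∧
    v = (∑ i ∈ Finset.range (m + 1), C (τ i) (τ (i + 1) - 1)) + (m : ℝ) * β}

/-- PELT pruning criterion: assuming the splitting inequality
`C(r, s-1) + C(s, t-1) + K ≤ C(r, t-1)` for all `1 ≤ r < s < t`, if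
`F(r) + C(r, s-1) + K ≥ F(s)`, then for every `t > s`,
`F(r) + C(r, t-1) + β ≥ F(s) + C(s, t-1) + β`, so `r` never beats `s` as the
last changepoint prior to any future time `t` and may be discarded. -/
theorem pelt_pruning_criterion (C : ℕ → ℕ → ℝ) (β K : ℝ)
    (hC : ∀ r s t : ℕ, 1 ≤ r → r < s → s < t →
      C r (s - 1) + C s (t - 1) + K ≤ C r (t - 1))
    (r s : ℕ) (hr : 1 ≤ r) (hrs : r < s)
    (hprune : opF C β s ≤ opF C β r + C r (s - 1) + K) :
    ∀ t : ℕ, s < t →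
      opF C β s + C s (t - 1) + β ≤ opF C β r + C r (t - 1) + β := by
  intro t ht
  have h := hC r s t hr hrs ht
  linarith
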